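/- For the cycle graph C_n, the number of SEMI-admissible partial orientations equals 3^n - 2^n when n is odd, and 3^n - 2^n - binom(n, n/2) when n is even. -/

import Mathlib

open Finset SimpleGraph
open scoped Classical

variable {V : Type*} [Fintype V] [DecidableEq V]

/-- `O` is a partial orientation of `G`: a set of steps along edges of `G`,
containing at most one direction per edge. -/
def IsPO (G : SimpleGraph V) (O : Finset (V × V)) : Prop :=
  ∀ p ∈ O, G.Adj p.1 p.2 ∧ (p.2, p.1) ∉ O

/-- A total orientation orients every edge. -/
def IsTotalOn (G : SimpleGraph V) (O : Finset (V × V)) : Prop :=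
  ∀ u v : V, G.Adj u v → (u, v) ∈ O ∨ (v, u) ∈ O

/-- `O` contains a directed cycle of steps. -/
def HasDirCycle (O : Finset (V × V)) : Prop :=
  ∃ (k : ℕ) (c : Fin (k + 1) → V), 1 ≤ k ∧ Function.Injective c ∧
    ∀ i : Fin (k + 1), (c i, c (i + 1)) ∈ O

/-- An acyclic partial orientation. -/
def IsAcyclicPO (G : SimpleGraph V) (O : Finset (V × V)) : Prop :=
  IsPO G O ∧ ¬ HasDirCycle O

/-- Indegree of vertex `v` in the orientation `O`. -/
def indeg (O : Finset (V × V)) (v : V) : ℕ := (O.filter (fun p => p.2 = v)).card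

/-- A potential cycle for `O`: a directed cycle of steps, each compatible with `O`
(i.e. whose reversal is not in `O`). -/
def IsPotCycle (G : SimpleGraph V) (O : Finset (V × V)) {k : ℕ} (c : Fin (k + 1) → V) : Prop :=
  1 ≤ k ∧ Function.Injective c ∧
    ∀ i : Fin (k + 1), G.Adj (c i) (c (i + 1)) ∧ (c (i + 1), c i) ∉ O

/-- Score of a step compatible with `O`, with respect to the parameter list `a`. -/
def stepScore (a : V → V → ℝ) (O : Finset (V × V)) (p : V × V) : ℝ :=
  if p ∈ O then -(a p.2 p.1) else a p.1 p.2

/-- Score of a potential cycle. -/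
def cycScore (a : V → V → ℝ) (O : Finset (V × V)) {k : ℕ} (c : Fin (k + 1) → V) : ℝ :=
  ∑ i : Fin (k + 1), stepScore a O (c i, c (i + 1))

/-- `O` is `a`-admissible: every potential cycle has strictly positive score. -/
def IsAdmissible (G : SimpleGraph V) (a : V → V → ℝ) (O : Finset (V × V)) : Prop :=
  ∀ (k : ℕ) (c : Fin (k + 1) → V), IsPotCycle G O c → 0 < cycScore a O c

/-- `O` is almost-`a`-admissible: not admissible, but no potential cycle has negative score. -/
def IsAlmostAdmissible (G : SimpleGraph V) (a : V → V → ℝ) (O : Finset (V × V)) : Prop :=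
  ¬ IsAdmissible G a O ∧
    ∀ (k : ℕ) (c : Fin (k + 1) → V), IsPotCycle G O c → 0 ≤ cycScore a O c

/-- The parameter list condition: the central region of `Σ_G(A)` is nonempty. -/
def HasCentral (G : SimpleGraph V) (a : V → V → ℝ) : Prop :=
  ∃ x : V → ℝ, ∀ u v : V, G.Adj u v → x u - x v < a u v

/-- Number of edges of `G_•` from `i` to vertices outside `W` (including the edge to the sink). -/
noncomputable def dW (G : SimpleGraph V) (W : Finset V) (i : V) : ℕ :=
  1 + (Finset.univ.filter (fun u => u ∉ W ∧ G.Adj i u)).card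

/-- `c` is a parking function of `G_•` with respect to the added sink `v₀`. -/
def IsPF (G : SimpleGraph V) (c : V → ℤ) : Prop :=
  ∀ W : Finset V, W.Nonempty → ∃ i ∈ W, 0 ≤ c i ∧ c i < dW G W i


section Aux
variable {n : ℕ} [NeZero n]
open Fin.CommRing Fin.NatCast

lemma fin_val_one (hn : 3 ≤ n) : (1 : Fin n).val = 1 := by
  rw [Fin.val_one']; exact Nat.mod_eq_of_lt (by omega)

lemma fin_two_ne_zero (hn : 3 ≤ n) : (2 : Fin n) ≠ 0 := by
  intro h
  have h2 : (2 : Fin n) = ((2 : ℕ) : Fin n) := by push_cast; ring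
  have := congrArg Fin.val (h2 ▸ h)
  rw [Fin.val_natCast] at this
  simp at this
  have := Nat.le_of_dvd (by norm_num) (Nat.dvd_of_mod_eq_zero this)
  omega

lemma fin_one_ne_negone (hn : 3 ≤ n) : (1 : Fin n) ≠ -1 := by
  intro h
  exact fin_two_ne_zero hn (by linear_combination h)

lemma fin_natCast_eq_zero (hn : 3 ≤ n) {m : ℕ} (h : ((m : ℕ) : Fin n) = 0) : n ∣ m := by
  have := congrArg Fin.val h
  rw [Fin.val_natCast] at this
  exact Nat.dvd_of_mod_eq_zero (by simpa using this)

lemma cg_adj_iff (hn : 3 ≤ n) {u v : Fin n} :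
    (cycleGraph n).Adj u v ↔ v = u + 1 ∨ u = v + 1 := by
  rw [cycleGraph_adj']
  constructor
  · rintro (h | h)
    · right
      have h1 : u - v = 1 := Fin.ext (by rw [fin_val_one hn]; exact h)
      have := congrArg (· + v) h1
      simpa [sub_add_cancel, add_comm] using this
    · left
      have h1 : v - u = 1 := Fin.ext (by rw [fin_val_one hn]; exact h)
      have := congrArg (· + u) h1
      simpa [sub_add_cancel, add_comm] using this
  · rintro (h | h)
    · right; rw [h, add_sub_cancel_left, fin_val_one hn]
    · left; rw [h, add_sub_cancel_left, fin_val_one hn]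

lemma cg_adj_succ (hn : 3 ≤ n) (v : Fin n) : (cycleGraph n).Adj v (v + 1) :=
  (cg_adj_iff hn).2 (Or.inl rfl)

/-- Encoding of a partial orientation of the cycle graph by edge states. -/
noncomputable def EOr (n : ℕ) [NeZero n] (f : Fin n → Option Bool) : Finset (Fin n × Fin n) :=
  Finset.univ.filter (fun p =>
    (p.2 = p.1 + 1 ∧ f p.1 = some true) ∨ (p.1 = p.2 + 1 ∧ f p.2 = some false))

lemma fin_add_two_ne (hn : 3 ≤ n) (v : Fin n) : v ≠ v + 2 := by
  intro h
  have : (2 : Fin n) = 0 := by linear_combination -h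
  exact fin_two_ne_zero hn this

lemma mem_EOr_fwd (hn : 3 ≤ n) (f : Fin n → Option Bool) (v : Fin n) :
    (v, v + 1) ∈ EOr n f ↔ f v = some true := by
  rw [EOr, Finset.mem_filter]
  simp only [Finset.mem_univ, true_and]
  constructor
  · rintro (h | ⟨h, _⟩)
    · exact h
    · exact absurd (by linear_combination h) (fin_add_two_ne hn v)
  · exact fun h => Or.inl h

lemma mem_EOr_bwd (hn : 3 ≤ n) (f : Fin n → Option Bool) (v : Fin n) :
    (v + 1, v) ∈ EOr n f ↔ f v = some false := by
  rw [EOr, Finset.mem_filter]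
  simp only [Finset.mem_univ, true_and]
  constructor
  · rintro (⟨h, _⟩ | h)
    · exact absurd (by linear_combination h) (fin_add_two_ne hn v)
    · exact h
  · exact fun h => Or.inr h

lemma isPO_EOr (hn : 3 ≤ n) (f : Fin n → Option Bool) : IsPO (cycleGraph n) (EOr n f) := by
  intro p hp
  simp only [EOr, Finset.mem_filter, Finset.mem_univ, true_and] at hp
  rcases hp with ⟨h1, h2⟩ | ⟨h1, h2⟩
  · refine ⟨h1 ▸ cg_adj_succ hn p.1, ?_⟩
    rw [show ((p.2, p.1) : Fin n × Fin n) = (p.1 + 1, p.1) by rw [← h1]]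
    rw [mem_EOr_bwd hn, h2]
    simp
  · refine ⟨?_, ?_⟩
    · rw [show p.1 = p.2 + 1 from h1]
      exact ((cg_adj_succ hn p.2).symm)
    · rw [show ((p.2, p.1) : Fin n × Fin n) = (p.2, p.2 + 1) by rw [← h1]]
      rw [mem_EOr_fwd hn, h2]
      simp

lemma option_bool_ext {x y : Option Bool}
    (ht : x = some true ↔ y = some true) (hf : x = some false ↔ y = some false) : x = y := by
  rcases x with _ | (_ | _) <;> rcases y with _ | (_ | _) <;> simp_all

lemma EOr_injective (hn : 3 ≤ n) : Function.Injective (EOr n) := by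
  intro f g h
  funext v
  exact option_bool_ext
    ((mem_EOr_fwd hn f v).symm.trans (h ▸ mem_EOr_fwd hn g v))
    ((mem_EOr_bwd hn f v).symm.trans (h ▸ mem_EOr_bwd hn g v))

lemma EOr_surj (hn : 3 ≤ n) (O : Finset (Fin n × Fin n)) (hO : IsPO (cycleGraph n) O) :
    ∃ f : Fin n → Option Bool, EOr n f = O := by
  refine ⟨fun v => if (v, v + 1) ∈ O then some true
    else if (v + 1, v) ∈ O then some false else none, ?_⟩
  ext ⟨p1, p2⟩
  simp only [EOr, Finset.mem_filter, Finset.mem_univ, true_and]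
  constructor
  · rintro (⟨rfl, h2⟩ | ⟨rfl, h2⟩) <;>
      (split_ifs at h2 with hc1 hc2 <;> simp_all)
  · intro hp
    obtain ⟨hadj, hrev⟩ := hO _ hp
    simp only at hadj hrev
    rcases (cg_adj_iff hn).1 hadj with rfl | rfl
    · exact Or.inl ⟨rfl, if_pos hp⟩
    · refine Or.inr ⟨rfl, ?_⟩
      rw [if_neg hrev, if_pos hp]

/-- number of edges with state `b` -/
noncomputable def cnt (n : ℕ) (f : Fin n → Option Bool) (b : Bool) : ℕ :=
  (Finset.univ.filter (fun v => f v = some b)).card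

lemma sum_pm (P : Fin n → Prop) [DecidablePred P] :
    ∑ v : Fin n, (if P v then (-1 : ℝ) else 1) = n - 2 * (Finset.univ.filter P).card := by
  classical
  rw [Finset.sum_ite, Finset.sum_const, Finset.sum_const]
  have h := Finset.card_filter_add_card_filter_not (s := (univ : Finset (Fin n))) (p := P)
  rw [Finset.card_univ, Fintype.card_fin] at h
  simp only [nsmul_eq_mul, mul_one, mul_neg]
  have h2 : ((univ.filter P).card : ℝ) + (univ.filter (fun a => ¬ P a)).card = n := by
    exact_mod_cast congrArg Nat.cast h
  linarith

lemma cycScore_eval {k : ℕ} (O : Finset (Fin n × Fin n)) (c : Fin (k + 1) → Fin n)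
    (hbij : Function.Bijective c) (e : Fin n) (hstep : ∀ i, c (i + 1) = c i + e) :
    cycScore (fun _ _ => (1 : ℝ)) O c = ∑ v : Fin n, stepScore (fun _ _ => 1) O (v, v + e) := by
  unfold cycScore
  exact Fintype.sum_bijective c hbij _ _ (fun i => by rw [hstep i])

lemma score_fwd (hn : 3 ≤ n) (f : Fin n → Option Bool) :
    ∑ v : Fin n, stepScore (fun _ _ => (1 : ℝ)) (EOr n f) (v, v + 1)
      = n - 2 * cnt n f true := by
  rw [show ∑ v : Fin n, stepScore (fun _ _ => (1 : ℝ)) (EOr n f) (v, v + 1)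
      = ∑ v : Fin n, (if f v = some true then (-1 : ℝ) else 1) from
    Finset.sum_congr rfl fun v _ => by
      unfold stepScore
      rw [if_congr (mem_EOr_fwd hn f v) rfl rfl]]
  rw [sum_pm]
  simp only [cnt, Finset.filter_congr_decidable]

lemma score_bwd (hn : 3 ≤ n) (f : Fin n → Option Bool) :
    ∑ v : Fin n, stepScore (fun _ _ => (1 : ℝ)) (EOr n f) (v + 1, v)
      = n - 2 * cnt n f false := by
  rw [show ∑ v : Fin n, stepScore (fun _ _ => (1 : ℝ)) (EOr n f) (v + 1, v)
      = ∑ v : Fin n, (if f v = some false then (-1 : ℝ) else 1) from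
    Finset.sum_congr rfl fun v _ => by
      unfold stepScore
      rw [if_congr (mem_EOr_bwd hn f v) rfl rfl]]
  rw [sum_pm]
  simp only [cnt, Finset.filter_congr_decidable]

lemma sum_step_neg (O : Finset (Fin n × Fin n)) :
    ∑ v : Fin n, stepScore (fun _ _ => (1 : ℝ)) O (v, v + (-1))
      = ∑ v : Fin n, stepScore (fun _ _ => (1 : ℝ)) O (v + 1, v) := by
  refine (Fintype.sum_bijective (fun w : Fin n => w + 1)
    (Equiv.addRight (1 : Fin n)).bijective _ _ (fun w => ?_)).symm
  congr 1
  ring_nf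

/-- the standard directed cycle through all of `Fin n` -/
noncomputable def stdC (n : ℕ) [NeZero n] : Fin (n - 1 + 1) → Fin n :=
  fun i => ⟨i.val % n, Nat.mod_lt _ n.pos_of_neZero⟩

lemma stdC_val (hn : 3 ≤ n) (i : Fin (n - 1 + 1)) : (stdC n i).val = i.val := by
  have := i.isLt
  exact Nat.mod_eq_of_lt (by omega)

lemma stdC_inj (hn : 3 ≤ n) : Function.Injective (stdC n) := by
  intro i j h
  have := congrArg Fin.val h
  rw [stdC_val hn, stdC_val hn] at this
  exact Fin.ext this

lemma stdC_bij (hn : 3 ≤ n) : Function.Bijective (stdC n) := by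
  rw [Fintype.bijective_iff_injective_and_card]
  refine ⟨stdC_inj hn, by simp; omega⟩

lemma stdC_step (hn : 3 ≤ n) (i : Fin (n - 1 + 1)) : stdC n (i + 1) = stdC n i + 1 := by
  have h : n - 1 + 1 = n := by omega
  obtain ⟨iv, hlt⟩ := i
  apply Fin.ext
  simp only [stdC, Fin.add_def, Fin.val_mk]
  rw [fin_val_one hn, fin_val_one (show (3:ℕ) ≤ n - 1 + 1 by omega)]
  rw [Nat.mod_eq_of_lt (show iv < n by omega)]
  rw [h]
  exact Nat.mod_mod_of_dvd _ dvd_rfl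

lemma not_adm_true (hn : 3 ≤ n) (f : Fin n → Option Bool)
    (hno : ∀ v, f v ≠ some false) (hm : n ≤ 2 * cnt n f true) :
    ¬ IsAdmissible (cycleGraph n) (fun _ _ => (1 : ℝ)) (EOr n f) := by
  intro hadm
  have hpot : IsPotCycle (cycleGraph n) (EOr n f) (stdC n) := by
    refine ⟨by omega, stdC_inj hn, fun i => ?_⟩
    rw [stdC_step hn]
    refine ⟨cg_adj_succ hn _, ?_⟩
    rw [mem_EOr_bwd hn]
    exact fun h => hno _ h
  have hpos := hadm _ _ hpot
  rw [cycScore_eval _ _ (stdC_bij hn) 1 (stdC_step hn), score_fwd hn f] at hpos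
  have : (n : ℝ) ≤ 2 * cnt n f true := by exact_mod_cast hm
  linarith

lemma not_adm_false (hn : 3 ≤ n) (f : Fin n → Option Bool)
    (hno : ∀ v, f v ≠ some true) (hm : n ≤ 2 * cnt n f false) :
    ¬ IsAdmissible (cycleGraph n) (fun _ _ => (1 : ℝ)) (EOr n f) := by
  intro hadm
  have hstep : ∀ i, (fun j => - stdC n j) (i + 1) = (fun j => - stdC n j) i + (-1) := by
    intro i
    simp only
    rw [stdC_step hn]
    ring
  have hinj : Function.Injective (fun j => - stdC n j) :=
    fun i j h => stdC_inj hn (by simpa using neg_injective h)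
  have hbij : Function.Bijective (fun j => - stdC n j) :=
    (Fintype.bijective_iff_injective_and_card _).2 ⟨hinj, by simp; omega⟩
  have hpot : IsPotCycle (cycleGraph n) (EOr n f) (fun j => - stdC n j) := by
    refine ⟨by omega, hinj, fun i => ?_⟩
    rw [hstep i]
    simp only
    constructor
    · exact (cg_adj_iff hn).2 (Or.inr (by ring))
    · rw [show ((-stdC n i + -1, -stdC n i) : Fin n × Fin n)
          = ((-stdC n i + -1), (-stdC n i + -1) + 1) from Prod.ext rfl (by ring)]
      rw [mem_EOr_fwd hn]
      exact fun h => hno _ h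
  have hpos := hadm _ _ hpot
  rw [cycScore_eval _ _ hbij (-1) hstep, sum_step_neg, score_bwd hn f] at hpos
  have : (n : ℝ) ≤ 2 * cnt n f false := by exact_mod_cast hm
  linarith

lemma step_cases (hn : 3 ≤ n) {u v : Fin n} (h : (cycleGraph n).Adj u v) :
    v = u + 1 ∨ v = u + (-1) := by
  rcases (cg_adj_iff hn).1 h with h1 | h1
  · exact Or.inl h1
  · exact Or.inr (by linear_combination -h1)

lemma cycle_structure (hn : 3 ≤ n) {k : ℕ} (hk : 2 ≤ k) (c : Fin (k + 1) → Fin n)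
    (hinj : Function.Injective c) (hadj : ∀ i, (cycleGraph n).Adj (c i) (c (i + 1))) :
    ∃ e : Fin n, (e = 1 ∨ e = -1) ∧ (∀ i, c (i + 1) = c i + e) ∧ n = k + 1 := by
  set d : Fin (k + 1) → Fin n := fun i => c (i + 1) - c i with hd_def
  have hstepc : ∀ i, c (i + 1) = c i + d i := fun i => by simp [hd_def]
  have hd' : ∀ i, d i = 1 ∨ d i = -1 := by
    intro i
    rcases step_cases hn (hadj i) with h1 | h1
    · exact Or.inl (by simp [hd_def]; linear_combination h1)
    · exact Or.inr (by simp [hd_def]; linear_combination h1)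
  have h1n : (1 : Fin n) ≠ -1 := fin_one_ne_negone hn
  have htwo : (2 : Fin (k + 1)) ≠ 0 := fin_two_ne_zero (by omega)
  have hcs : ∀ i : Fin (k + 1), c (i + 1 + 1) ≠ c i := by
    intro i h
    have := hinj h
    exact htwo (by linear_combination this)
  have hconst : ∀ i, d (i + 1) = d i := by
    intro i
    rcases hd' i with h1 | h1 <;> rcases hd' (i + 1) with h2 | h2
    · rw [h1, h2]
    · exfalso
      refine hcs i ?_
      rw [hstepc (i + 1), hstepc i, h1, h2]
      ring
    · exfalso
      refine hcs i ?_
      rw [hstepc (i + 1), hstepc i, h1, h2]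
      ring
    · rw [h1, h2]
  have hDval : ∀ j : ℕ, ∀ hj : j < k + 1, d ⟨j, hj⟩ = d 0 := by
    intro j
    induction j with
    | zero =>
      intro hj
      congr 1
    | succ j ih =>
      intro hj
      have hj' : j < k + 1 := by omega
      have heq : (⟨j + 1, hj⟩ : Fin (k + 1)) = ⟨j, hj'⟩ + 1 := by
        apply Fin.ext
        rw [Fin.add_def, fin_val_one (by omega : 3 ≤ k + 1)]
        simp [Nat.mod_eq_of_lt hj]
      rw [heq, hconst, ih hj']
  have hDall : ∀ i, d i = d 0 := fun i => by
    have := hDval i.val i.isLt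
    simpa [Fin.eta] using this
  have hstep : ∀ i, c (i + 1) = c i + d 0 := fun i => by rw [hstepc i, hDall i]
  have hval : ∀ j : ℕ, ∀ hj : j < k + 1, c ⟨j, hj⟩ = c 0 + (j : Fin n) * d 0 := by
    intro j
    induction j with
    | zero =>
      intro hj
      have h0 : (⟨0, hj⟩ : Fin (k + 1)) = 0 := by apply Fin.ext; simp
      rw [h0]
      simp
    | succ j ih =>
      intro hj
      have hj' : j < k + 1 := by omega
      have heq : (⟨j + 1, hj⟩ : Fin (k + 1)) = ⟨j, hj'⟩ + 1 := by
        apply Fin.ext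
        rw [Fin.add_def, fin_val_one (by omega : 3 ≤ k + 1)]
        simp [Nat.mod_eq_of_lt hj]
      rw [heq, hstep, ih hj']
      push_cast
      ring
  have hwrap : (⟨k, by omega⟩ : Fin (k + 1)) + 1 = 0 := by
    apply Fin.ext
    rw [Fin.add_def, fin_val_one (by omega : 3 ≤ k + 1)]
    simp
  have h1 : c 0 = c 0 + (k : Fin n) * d 0 + d 0 := by
    rw [← hval k (by omega), ← hstep ⟨k, by omega⟩, hwrap]
  have hz : (((k + 1 : ℕ) : Fin n)) * d 0 = 0 := by
    push_cast
    linear_combination -h1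
  have hcast : (((k + 1 : ℕ) : Fin n)) = 0 := by
    rcases hd' 0 with h2 | h2
    · rw [h2, mul_one] at hz; exact hz
    · rw [h2] at hz; linear_combination -hz
  have hdvd : n ∣ k + 1 := fin_natCast_eq_zero hn hcast
  have hle : k + 1 ≤ n := by
    have := Fintype.card_le_of_injective c hinj
    simpa using this
  have hkn : n = k + 1 := Nat.le_antisymm (Nat.le_of_dvd (by omega) hdvd) hle
  exact ⟨d 0, hd' 0, hstep, hkn⟩

lemma adm_good (hn : 3 ≤ n) (f : Fin n → Option Bool)
    (hT : ¬ ((∀ v, f v ≠ some false) ∧ n ≤ 2 * cnt n f true))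
    (hF : ¬ ((∀ v, f v ≠ some true) ∧ n ≤ 2 * cnt n f false)) :
    IsAdmissible (cycleGraph n) (fun _ _ => (1 : ℝ)) (EOr n f) := by
  rintro k c ⟨hk1, hinj, hcomp⟩
  by_cases hk : k = 1
  · subst hk
    have h0 := (hcomp 0).2
    have h1 := (hcomp 1).2
    rw [show (0 + 1 : Fin 2) = 1 by decide] at h0
    rw [show (1 + 1 : Fin 2) = 0 by decide] at h1
    unfold cycScore
    rw [Fin.sum_univ_two, show (0 + 1 : Fin 2) = 1 by decide, show (1 + 1 : Fin 2) = 0 by decide]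
    unfold stepScore
    rw [if_neg h1, if_neg h0]
    norm_num
  · have hk2 : 2 ≤ k := by omega
    obtain ⟨e, he, hstep, hkn⟩ := cycle_structure hn hk2 c hinj (fun i => (hcomp i).1)
    have hbij : Function.Bijective c :=
      (Fintype.bijective_iff_injective_and_card c).2 ⟨hinj, by simp [hkn]⟩
    rcases he with rfl | rfl
    · rw [cycScore_eval _ _ hbij 1 hstep, score_fwd hn f]
      have hno : ∀ v, f v ≠ some false := by
        intro v hv
        obtain ⟨i, hi⟩ := hbij.2 v
        have hni := (hcomp i).2
        rw [hstep i, hi] at hni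
        exact hni ((mem_EOr_bwd hn f v).2 hv)
      have hlt : 2 * cnt n f true < n := by
        by_contra hle
        exact hT ⟨hno, by omega⟩
      have : (2 * cnt n f true : ℝ) < n := by exact_mod_cast hlt
      push_cast at this ⊢
      linarith
    · rw [cycScore_eval _ _ hbij (-1) hstep, sum_step_neg, score_bwd hn f]
      have hno : ∀ v, f v ≠ some true := by
        intro v hv
        obtain ⟨i, hi⟩ := hbij.2 (v + 1)
        have hni := (hcomp i).2
        rw [hstep i, hi] at hni
        rw [show (v + 1 + -1 : Fin n) = v by ring] at hni
        exact hni ((mem_EOr_fwd hn f v).2 hv)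
      have hlt : 2 * cnt n f false < n := by
        by_contra hle
        exact hF ⟨hno, by omega⟩
      have : (2 * cnt n f false : ℝ) < n := by exact_mod_cast hlt
      push_cast at this ⊢
      linarith

/-- `f` is bad for direction `b`. -/
def IsBad (n : ℕ) (f : Fin n → Option Bool) (b : Bool) : Prop :=
  (∀ v, f v ≠ some (!b)) ∧ n ≤ 2 * cnt n f b

lemma adm_iff (hn : 3 ≤ n) (f : Fin n → Option Bool) :
    IsAdmissible (cycleGraph n) (fun _ _ => (1 : ℝ)) (EOr n f)
      ↔ ¬ IsBad n f true ∧ ¬ IsBad n f false := by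
  constructor
  · intro h
    constructor
    · rintro ⟨h1, h2⟩
      exact not_adm_true hn f (by simpa using h1) h2 h
    · rintro ⟨h1, h2⟩
      exact not_adm_false hn f (by simpa using h1) h2 h
  · rintro ⟨h1, h2⟩
    exact adm_good hn f (fun hb => h1 ⟨by simpa using hb.1, hb.2⟩)
      (fun hb => h2 ⟨by simpa using hb.1, hb.2⟩)

lemma card_bad (hn : 3 ≤ n) (b : Bool) :
    (Finset.univ.filter (fun f : Fin n → Option Bool => IsBad n f b)).card
      = ∑ m ∈ (Finset.range (n + 1)).filter (fun m => n ≤ 2 * m), n.choose m := by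
  have h1 : (Finset.univ.filter (fun f : Fin n → Option Bool => IsBad n f b)).card
      = (Finset.univ.filter (fun s : Finset (Fin n) => n ≤ 2 * s.card)).card := by
    apply Finset.card_nbij' (i := fun f => Finset.univ.filter (fun v => f v = some b))
      (j := fun s v => if v ∈ s then some b else none)
    · intro f hf
      simp only [Finset.mem_coe, Finset.mem_filter, Finset.mem_univ, true_and] at hf ⊢
      exact hf.2
    · intro s hs
      simp only [Finset.mem_coe, Finset.mem_filter, Finset.mem_univ, true_and] at hs ⊢
      constructor
      · intro v hv
        simp only at hv
        split_ifs at hv with h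
        simp at hv
      · have : (Finset.univ.filter (fun v => (if v ∈ s then some b else none) = some b)) = s := by
          ext v
          simp only [Finset.mem_filter, Finset.mem_univ, true_and]
          split_ifs with h <;> simp [h]
        rw [show cnt n (fun v => if v ∈ s then some b else none) b
            = (Finset.univ.filter (fun v => (if v ∈ s then some b else none) = some b)).card
            from rfl, this]
        exact hs
    · intro f hf
      simp only [Finset.mem_coe, Finset.mem_filter, Finset.mem_univ, true_and] at hf
      funext v
      beta_reduce
      by_cases h : f v = some b
      · rw [if_pos (by simp [h])]
        exact h.symm
      · rw [if_neg (by simp [h])]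
        rcases hb : f v with _ | b'
        · rfl
        · exfalso
          have hb' : b' = !b := by
            rcases b with _|_ <;> rcases b' with _|_ <;> simp_all
          rw [hb'] at hb
          exact hf.1 v hb
    · intro s hs
      ext v
      simp only [Finset.mem_filter, Finset.mem_univ, true_and]
      split_ifs with h <;> simp [h]
  rw [h1]
  have h2 : (Finset.univ.filter (fun s : Finset (Fin n) => n ≤ 2 * s.card))
      = ((Finset.range (n + 1)).filter (fun m => n ≤ 2 * m)).biUnion
        (fun m => Finset.powersetCard m Finset.univ) := by
    ext s
    simp only [Finset.mem_filter, Finset.mem_univ, true_and, Finset.mem_biUnion,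
      Finset.mem_range, Finset.mem_powersetCard_univ]
    constructor
    · intro h
      exact ⟨s.card, ⟨by have := Finset.card_le_univ s; simp at this; omega, h⟩, rfl⟩
    · rintro ⟨m, ⟨_, hm⟩, rfl⟩
      exact hm
  rw [h2, Finset.card_biUnion]
  · apply Finset.sum_congr rfl
    intro m _
    rw [Finset.card_powersetCard]
    simp
  · intro m _ m' _ hmm
    apply Finset.disjoint_left.2
    intro s hs hs'
    rw [Finset.mem_powersetCard_univ] at hs hs'
    exact hmm (hs ▸ hs')

lemma choose_half_sum (n : ℕ) :
    2 * ∑ m ∈ (Finset.range (n + 1)).filter (fun m => n ≤ 2 * m), n.choose m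
      = 2 ^ n + (if Even n then n.choose (n / 2) else 0) := by
  have hsplit : ∑ m ∈ (Finset.range (n + 1)).filter (fun m => n ≤ 2 * m), n.choose m
      + ∑ m ∈ (Finset.range (n + 1)).filter (fun m => ¬ n ≤ 2 * m), n.choose m = 2 ^ n := by
    rw [Finset.sum_filter_add_sum_filter_not]
    exact Nat.sum_range_choose n
  have hrefl : ∑ m ∈ (Finset.range (n + 1)).filter (fun m => ¬ n ≤ 2 * m), n.choose m
      = ∑ m ∈ (Finset.range (n + 1)).filter (fun m => n < 2 * m), n.choose m := by
    apply Finset.sum_nbij' (i := fun m => n - m) (j := fun m => n - m)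
    · intro m hm
      simp only [Finset.mem_filter, Finset.mem_range] at hm ⊢
      omega
    · intro m hm
      simp only [Finset.mem_filter, Finset.mem_range] at hm ⊢
      omega
    · intro m hm
      simp only [Finset.mem_filter, Finset.mem_range] at hm
      omega
    · intro m hm
      simp only [Finset.mem_filter, Finset.mem_range] at hm
      omega
    · intro m hm
      simp only [Finset.mem_filter, Finset.mem_range] at hm
      exact (Nat.choose_symm (by omega)).symm
  have hdecomp : ∑ m ∈ (Finset.range (n + 1)).filter (fun m => n ≤ 2 * m), n.choose m
      = ∑ m ∈ (Finset.range (n + 1)).filter (fun m => n < 2 * m), n.choose m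
        + ∑ m ∈ (Finset.range (n + 1)).filter (fun m => 2 * m = n), n.choose m := by
    rw [← Finset.sum_filter_add_sum_filter_not
      ((Finset.range (n + 1)).filter (fun m => n ≤ 2 * m)) (fun m => n < 2 * m)]
    congr 1
    · congr 1
      ext m
      simp only [Finset.mem_filter, Finset.mem_range]
      omega
    · congr 1
      ext m
      simp only [Finset.mem_filter, Finset.mem_range]
      omega
  have hmid : ∑ m ∈ (Finset.range (n + 1)).filter (fun m => 2 * m = n), n.choose m
      = if Even n then n.choose (n / 2) else 0 := by
    rcases Nat.even_or_odd n with he | ho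
    · obtain ⟨t, ht⟩ := he
      have : (Finset.range (n + 1)).filter (fun m => 2 * m = n) = {t} := by
        ext m
        simp only [Finset.mem_filter, Finset.mem_range, Finset.mem_singleton]
        omega
      rw [this, Finset.sum_singleton, if_pos ⟨t, ht⟩]
      congr 1
      omega
    · have : (Finset.range (n + 1)).filter (fun m => 2 * m = n) = ∅ := by
        ext m
        simp only [Finset.mem_filter, Finset.mem_range, Finset.notMem_empty, iff_false]
        rintro ⟨_, h⟩
        obtain ⟨t, ht⟩ := ho
        omega
      rw [this, Finset.sum_empty, if_neg (by
        intro he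
        obtain ⟨t, ht⟩ := he
        obtain ⟨u, hu⟩ := ho
        omega)]
  omega

lemma good_card (hn : 3 ≤ n) :
    (Finset.univ.filter (fun f : Fin n → Option Bool =>
        IsAdmissible (cycleGraph n) (fun _ _ => (1 : ℝ)) (EOr n f))).card
      = 3 ^ n - (2 ^ n + (if Even n then n.choose (n / 2) else 0)) := by
  have hA : Finset.univ.filter (fun f : Fin n → Option Bool =>
        IsAdmissible (cycleGraph n) (fun _ _ => (1 : ℝ)) (EOr n f))
      = Finset.univ \ ((Finset.univ.filter (fun f : Fin n → Option Bool => IsBad n f true))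
          ∪ (Finset.univ.filter (fun f : Fin n → Option Bool => IsBad n f false))) := by
    ext f
    simp only [Finset.mem_filter, Finset.mem_univ, true_and, Finset.mem_sdiff,
      Finset.mem_union, not_or]
    rw [adm_iff hn f]
  have hdisj : Disjoint (Finset.univ.filter (fun f : Fin n → Option Bool => IsBad n f true))
      (Finset.univ.filter (fun f : Fin n → Option Bool => IsBad n f false)) := by
    rw [Finset.disjoint_left]
    intro f h1 h2
    simp only [Finset.mem_filter, Finset.mem_univ, true_and] at h1 h2
    have hz : cnt n f true = 0 := by
      rw [cnt, Finset.card_eq_zero, Finset.filter_eq_empty_iff]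
      intro v _
      simpa using h2.1 v
    have := h1.2
    omega
  rw [hA, Finset.card_sdiff_of_subset (Finset.subset_univ _),
    Finset.card_union_of_disjoint hdisj, card_bad hn true, card_bad hn false]
  have huniv : (Finset.univ : Finset (Fin n → Option Bool)).card = 3 ^ n := by
    rw [Finset.card_univ]
    simp [Fintype.card_fun]
  rw [huniv]
  have := choose_half_sum n
  omega

lemma main_count (hn : 3 ≤ n) :
    Set.ncard {O : Finset (Fin n × Fin n) | IsPO (cycleGraph n) O ∧
        IsAdmissible (cycleGraph n) (fun _ _ => (1 : ℝ)) O}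
      = 3 ^ n - (2 ^ n + (if Even n then n.choose (n / 2) else 0)) := by
  have hset : {O : Finset (Fin n × Fin n) | IsPO (cycleGraph n) O ∧
        IsAdmissible (cycleGraph n) (fun _ _ => (1 : ℝ)) O}
      = (EOr n) '' {f | IsAdmissible (cycleGraph n) (fun _ _ => (1 : ℝ)) (EOr n f)} := by
    ext O
    simp only [Set.mem_setOf_eq, Set.mem_image]
    constructor
    · rintro ⟨hpo, hadm⟩
      obtain ⟨f, rfl⟩ := EOr_surj hn O hpo
      exact ⟨f, hadm, rfl⟩
    · rintro ⟨f, hadm, rfl⟩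
      exact ⟨isPO_EOr hn f, hadm⟩
  rw [hset, Set.ncard_image_of_injective _ (EOr_injective hn)]
  have hcoe : {f : Fin n → Option Bool |
        IsAdmissible (cycleGraph n) (fun _ _ => (1 : ℝ)) (EOr n f)}
      = ↑(Finset.univ.filter (fun f : Fin n → Option Bool =>
        IsAdmissible (cycleGraph n) (fun _ _ => (1 : ℝ)) (EOr n f))) := by
    ext f
    simp
  rw [hcoe, Set.ncard_coe_finset, good_card hn]

end Aux

/-- The number of SEMI-admissible partial orientations of the cycle graph `Cₙ` is
`3ⁿ - 2ⁿ` for odd `n` and `3ⁿ - 2ⁿ - (n choose n/2)` for even `n`. -/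
theorem semi_admissible_cycleGraph_card (n : ℕ) (hn : 3 ≤ n) :
    (Odd n → Set.ncard {O : Finset (Fin n × Fin n) | IsPO (SimpleGraph.cycleGraph n) O ∧
        IsAdmissible (SimpleGraph.cycleGraph n) (fun _ _ => (1 : ℝ)) O} =
      3 ^ n - 2 ^ n) ∧
    (Even n → Set.ncard {O : Finset (Fin n × Fin n) | IsPO (SimpleGraph.cycleGraph n) O ∧
        IsAdmissible (SimpleGraph.cycleGraph n) (fun _ _ => (1 : ℝ)) O} =
      3 ^ n - 2 ^ n - n.choose (n / 2)) := by
  haveI : NeZero n := ⟨by omega⟩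
  have key := main_count hn
  constructor
  · intro hodd
    rw [key, if_neg (by simpa using Nat.not_even_iff_odd.2 hodd)]
    omega
  · intro heven
    rw [key, if_pos heven, Nat.sub_sub]
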